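/- For all ℓ ≥ 1 and n ≥ 1, the number z(ℓ,n) of stopping matrices in S^(ℓ,n) satisfies the recursion z(ℓ,n) = ℓ^n − Σ_{c=1}^{min(ℓ,n)} c! · C(ℓ,c) · C(n,c) · z(ℓ−c, n−c), with the convention z(0,0)=1 and z(ℓ,0)=1, z(0,n)=0 for n ≥ 1 as appropriate boundary cases. -/

import Mathlib

/-- Column weight: number of ones in column `j`. -/
def colWt {l n : ℕ} (M : Fin l → Fin n → Bool) (j : Fin n) : ℕ :=
  (Finset.univ.filter (fun i => M i j)).card

/-- Row weight: number of ones in row `i`. -/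
def rowWt {l n : ℕ} (M : Fin l → Fin n → Bool) (i : Fin l) : ℕ :=
  (Finset.univ.filter (fun j => M i j)).card

/-- `M ∈ S^(l,n)`: every column has Hamming weight exactly 1. -/
def isS {l n : ℕ} (M : Fin l → Fin n → Bool) : Prop :=
  ∀ j, colWt M j = 1

/-- Stopping matrix: no row has Hamming weight exactly 1. -/
def isStop {l n : ℕ} (M : Fin l → Fin n → Bool) : Prop :=
  ∀ i, rowWt M i ≠ 1

instance {l n : ℕ} : DecidablePred (isS (l := l) (n := n)) := fun _ =>
  inferInstanceAs (Decidable (∀ _, _ = _))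

instance {l n : ℕ} : DecidablePred (isStop (l := l) (n := n)) := fun _ =>
  inferInstanceAs (Decidable (∀ _, _ ≠ _))

/-- `z l n`: number of stopping matrices in `S^(l,n)`. -/
def z (l n : ℕ) : ℕ :=
  Fintype.card {M : Fin l → Fin n → Bool // isS M ∧ isStop M}


open Finset

def NoSing {α β : Type*} (g : α → β) : Prop := ∀ b : β, Nat.card {a : α // g a = b} ≠ 1
noncomputable def ZZ (α β : Type*) : ℕ := Nat.card {g : α → β // NoSing g}

lemma natCard_subtype {α : Type*} [Fintype α] (p : α → Prop) [DecidablePred p] :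
    Nat.card {x // p x} = (univ.filter p).card := by
  rw [Nat.card_eq_fintype_card, Fintype.card_subtype]

lemma natCard_one_iff {α : Type*} (p : α → Prop) :
    Nat.card {x // p x} = 1 ↔ ∃! x, p x := by
  rw [Nat.card_eq_one_iff_unique]
  constructor
  · rintro ⟨hs, ⟨⟨a, ha⟩⟩⟩
    exact ⟨a, ha, fun y hy => congrArg Subtype.val (hs.elim ⟨y, hy⟩ ⟨a, ha⟩)⟩
  · rintro ⟨a, ha, hu⟩
    exact ⟨⟨fun x y => Subtype.ext ((hu x x.2).trans (hu y y.2).symm)⟩, ⟨⟨a, ha⟩⟩⟩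

lemma ZZ_congr {α α' β β' : Type*} (e : α ≃ α') (e' : β ≃ β') : ZZ α β = ZZ α' β' := by
  apply Nat.card_congr
  refine Equiv.subtypeEquiv (Equiv.arrowCongr e e') ?_
  intro g
  have key : ∀ b', Nat.card {a' : α' // (Equiv.arrowCongr e e' g) a' = b'}
      = Nat.card {a : α // g a = e'.symm b'} := by
    intro b'
    apply Nat.card_congr
    refine Equiv.subtypeEquiv e.symm ?_
    intro a'
    simp [Equiv.arrowCongr, Equiv.eq_symm_apply]
  constructor
  · intro h b'
    rw [key]
    exact h _
  · intro h b
    have := h (e' b)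
    rwa [key, Equiv.symm_apply_apply] at this

lemma z_eq_ZZ (l n : ℕ) : z l n = ZZ (Fin n) (Fin l) := by
  classical
  rw [z, ← Nat.card_eq_fintype_card, ZZ]
  symm
  apply Nat.card_congr
  refine Equiv.ofBijective (fun f => ⟨fun i j => decide (f.1 j = i), ?_, ?_⟩) ⟨?_, ?_⟩
  · -- isS
    intro j
    have : (univ.filter (fun i => decide (f.1 j = i) = true)) = {f.1 j} := by
      ext i
      simp [eq_comm]
    simp only [colWt]
    rw [this, card_singleton]
  · -- isStop
    intro i
    have : (univ.filter (fun j => decide (f.1 j = i) = true)) = univ.filter (fun j => f.1 j = i) := by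
      simp
    simp only [rowWt]
    rw [this, ← natCard_subtype]
    exact f.2 i
  · -- injective
    rintro ⟨f, hf⟩ ⟨g, hg⟩ h
    simp only [Subtype.mk.injEq] at h
    refine Subtype.ext (funext fun j => ?_)
    have := congrFun (congrFun h (g j)) j
    simpa using this
  · -- surjective
    rintro ⟨M, hS, hStop⟩
    have h1 : ∀ j, ∃ i, univ.filter (fun i => M i j) = {i} := fun j =>
      Finset.card_eq_one.mp (hS j)
    choose f hfspec using h1
    have hM : ∀ i j, (M i j = true) ↔ i = f j := by
      intro i j
      have : i ∈ univ.filter (fun i => M i j) ↔ i ∈ ({f j} : Finset (Fin l)) := by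
        rw [hfspec j]
      simpa using this
    have hfib : ∀ i, Nat.card {j // f j = i} = rowWt M i := by
      intro i
      rw [natCard_subtype, rowWt]
      congr 1
      apply Finset.filter_congr
      intro j _
      rw [hM i j, eq_comm]
    refine ⟨⟨f, fun i => by rw [hfib]; exact hStop i⟩, ?_⟩
    refine Subtype.ext (funext fun i => funext fun j => ?_)
    by_cases h : f j = i
    · simp [h, (hM i j).mpr h.symm]
    · simp only [decide_eq_false_iff_not]
      have : ¬ (M i j = true) := fun hm => h ((hM i j).mp hm).symm
      simpa [h] using this


lemma partition (l n : ℕ) :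
    l ^ n = ∑ R : Finset (Fin l),
      Nat.card {f : Fin n → Fin l // ∀ i, (Nat.card {j // f j = i} = 1 ↔ i ∈ R)} := by
  classical
  have h0 : l ^ n = Fintype.card (Fin n → Fin l) := by simp
  rw [h0, ← Finset.card_univ]
  rw [Finset.card_eq_sum_card_fiberwise
    (f := fun f : Fin n → Fin l => univ.filter (fun i => Nat.card {j // f j = i} = 1))
    (t := univ) (fun _ _ => mem_univ _)]
  refine Finset.sum_congr rfl fun R _ => ?_
  have : Nat.card {f : Fin n → Fin l // ∀ i, (Nat.card {j // f j = i} = 1 ↔ i ∈ R)}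
      = (univ.filter (fun f : Fin n → Fin l => ∀ i, (Nat.card {j // f j = i} = 1 ↔ i ∈ R))).card := by
    rw [Nat.card_eq_fintype_card, Fintype.card_subtype]
  rw [this]
  congr 1
  apply Finset.filter_congr
  intro f _
  constructor
  · intro h i
    constructor
    · intro h1
      rw [← h]
      simpa using h1
    · intro hiR
      have : i ∈ univ.filter (fun i => Nat.card {j // f j = i} = 1) := h ▸ hiR
      simpa using this
  · intro h
    ext i
    simp [← Nat.card_eq_fintype_card, h i]


def Pcond {l n : ℕ} (R : Finset (Fin l)) (σ : {x // x ∈ R} ↪ Fin n) (f : Fin n → Fin l) : Prop :=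
  (∀ i : {x // x ∈ R}, f (σ i) = i.val) ∧ (∀ j, j ∉ univ.map σ → f j ∉ R) ∧
  (∀ i, i ∉ R → Nat.card {j // f j = i} ≠ 1)

lemma step3 {l n : ℕ} (R : Finset (Fin l)) (σ : {x // x ∈ R} ↪ Fin n) :
    Nat.card {f : Fin n → Fin l // Pcond R σ f}
      = ZZ {j : Fin n // j ∉ univ.map σ} {i : Fin l // i ∉ R} := by
  classical
  apply Nat.card_congr
  refine Equiv.ofBijective
    (fun f => ⟨fun j => ⟨f.1 j.1, f.2.2.1 j.1 j.2⟩, ?_⟩) ⟨?_, ?_⟩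
  · -- NoSing
    intro b
    have hkey : Nat.card {a : {j : Fin n // j ∉ univ.map σ} // f.1 a.1 = b.1}
        = Nat.card {j : Fin n // f.1 j = b.1} := by
      apply Nat.card_congr
      refine Equiv.ofBijective (fun a => ⟨a.1.1, a.2⟩) ⟨?_, ?_⟩
      · rintro ⟨⟨j, hj⟩, h2⟩ ⟨⟨j', hj'⟩, h2'⟩ h
        simp_all
      · rintro ⟨j, hfj⟩
        have hnm : j ∉ univ.map σ := by
          intro hmem
          obtain ⟨i, _, hi⟩ := mem_map.mp hmem
          rw [← hi] at hfj
          rw [f.2.1 i] at hfj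
          exact b.2 (hfj ▸ i.2)
        exact ⟨⟨⟨j, hnm⟩, hfj⟩, rfl⟩
    intro h1
    apply f.2.2.2 b.1 b.2
    rw [← hkey, ← h1]
    apply Nat.card_congr
    exact Equiv.subtypeEquivRight (fun a => by simp [Subtype.ext_iff])
  · -- injective
    rintro ⟨f, hf⟩ ⟨f', hf'⟩ h
    simp only [Subtype.mk.injEq] at h
    refine Subtype.ext (funext fun j => ?_)
    by_cases hj : j ∈ univ.map σ
    · obtain ⟨i, _, hi⟩ := mem_map.mp hj
      subst hi
      show f (σ i) = f' (σ i)
      rw [hf.1 i, hf'.1 i]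
    · have := congrFun (congrArg Subtype.val h) ⟨j, hj⟩
      exact congrArg Subtype.val this
  · -- surjective
    rintro ⟨g, hg⟩
    set F : Fin n → Fin l := fun j =>
      if h : j ∈ univ.map σ then ((mem_map.mp h).choose : {x // x ∈ R}).val
      else (g ⟨j, h⟩).val with hF
    have hc1 : ∀ i : {x // x ∈ R}, F (σ i) = i.val := by
      intro i
      have h : σ i ∈ univ.map σ := mem_map_of_mem _ (mem_univ i)
      rw [hF]
      simp only [dif_pos h]
      have := (mem_map.mp h).choose_spec.2
      rw [σ.injective this]
    have hc2 : ∀ j, j ∉ univ.map σ → F j ∉ R := by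
      intro j hj
      rw [hF]; simp only [dif_neg hj]
      exact (g ⟨j, hj⟩).2
    have hc3 : ∀ i, i ∉ R → Nat.card {j // F j = i} ≠ 1 := by
      intro i hi
      have hkey : Nat.card {j // F j = i} = Nat.card {a // g a = ⟨i, hi⟩} := by
        apply Nat.card_congr
        have hnot : ∀ j : {j // F j = i}, j.1 ∉ univ.map σ := by
          rintro ⟨j, hj⟩ hmem
          have : F j ∈ R := by
            rw [hF]; simp only [dif_pos hmem]
            exact ((mem_map.mp hmem).choose).2
          exact hi (hj ▸ this)
        refine Equiv.ofBijective (fun j => ⟨⟨j.1, hnot j⟩, ?_⟩) ⟨?_, ?_⟩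
        · refine Subtype.ext ?_
          show (g ⟨j.1, hnot j⟩).val = i
          have h2 : F j.1 = (g ⟨j.1, hnot j⟩).val := dif_neg (hnot j)
          exact h2.symm.trans j.2
        · rintro ⟨j, hj⟩ ⟨j', hj'⟩ h
          simp only [Subtype.mk.injEq] at h
          exact Subtype.ext h
        · rintro ⟨⟨j, hjm⟩, hgj⟩
          have hFj : F j = i := by
            rw [hF]; simp only [dif_neg hjm]
            exact congrArg Subtype.val hgj
          exact ⟨⟨j, hFj⟩, rfl⟩
      rw [hkey]
      exact hg ⟨i, hi⟩
    refine ⟨⟨F, hc1, hc2, hc3⟩, ?_⟩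
    refine Subtype.ext (funext fun a => ?_)
    refine Subtype.ext ?_
    show F a.1 = (g a).val
    rw [hF]
    simp only [dif_neg a.2]

lemma perR (l n : ℕ) (R : Finset (Fin l)) :
    Nat.card {f : Fin n → Fin l // ∀ i, (Nat.card {j // f j = i} = 1 ↔ i ∈ R)}
      = n.descFactorial R.card * z (l - R.card) (n - R.card) := by
  classical
  -- Step 1: identify with pairs (σ, f)
  have h1 : Nat.card {f : Fin n → Fin l // ∀ i, (Nat.card {j // f j = i} = 1 ↔ i ∈ R)}
      = Nat.card {p : ({x // x ∈ R} ↪ Fin n) × (Fin n → Fin l) // Pcond R p.1 p.2} := by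
    symm
    apply Nat.card_congr
    have hA : ∀ p : {p : ({x // x ∈ R} ↪ Fin n) × (Fin n → Fin l) // Pcond R p.1 p.2},
        ∀ i, (Nat.card {j // p.1.2 j = i} = 1 ↔ i ∈ R) := by
      rintro ⟨⟨σ, f⟩, hc1, hc2, hc3⟩ i
      dsimp only at hc1 hc2 hc3 ⊢
      constructor
      · intro hcard
        by_contra hiR
        exact hc3 i hiR hcard
      · intro hiR
        rw [natCard_one_iff]
        refine ⟨σ ⟨i, hiR⟩, hc1 ⟨i, hiR⟩, fun j' hj' => ?_⟩
        by_cases hm : j' ∈ univ.map σ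
        · obtain ⟨i', _, hi'⟩ := mem_map.mp hm
          have : i' = ⟨i, hiR⟩ := by
            apply Subtype.ext
            rw [← hc1 i', hi']
            exact hj'
          rw [← hi', this]
        · exact absurd (hj' ▸ hiR) (hc2 j' hm)
    refine Equiv.ofBijective (fun p => ⟨p.1.2, hA p⟩) ⟨?_, ?_⟩
    · rintro ⟨⟨σ, f⟩, hp⟩ ⟨⟨σ', f'⟩, hp'⟩ h
      simp only [Subtype.mk.injEq] at h
      have hff : f = f' := h
      subst hff
      refine Subtype.ext (Prod.ext ?_ rfl)
      refine Function.Embedding.ext fun i => ?_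
      have hu : ∃! j, f j = i.val :=
        (natCard_one_iff _).mp ((hA ⟨⟨σ, f⟩, hp⟩ i.val).mpr i.2)
      obtain ⟨j, -, hj2⟩ := hu
      rw [hj2 _ (hp.1 i), hj2 _ (hp'.1 i)]
    · rintro ⟨f, hf⟩
      have hu : ∀ i : {x // x ∈ R}, ∃! j, f j = i.val := fun i =>
        (natCard_one_iff _).mp ((hf i.val).mpr i.2)
      have hinj : Function.Injective (fun i : {x // x ∈ R} => (hu i).choose) := by
        intro i i' h
        have h' : (hu i).choose = (hu i').choose := h
        refine Subtype.ext ?_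
        rw [← (hu i).choose_spec.1, h', (hu i').choose_spec.1]
      set σ : {x // x ∈ R} ↪ Fin n := ⟨fun i => (hu i).choose, hinj⟩ with hσ
      have hc1 : ∀ i : {x // x ∈ R}, f (σ i) = i.val := fun i => (hu i).choose_spec.1
      have hc2 : ∀ j, j ∉ univ.map σ → f j ∉ R := by
        intro j hj hfj
        apply hj
        have := (hu ⟨f j, hfj⟩).choose_spec.2 j rfl
        exact mem_map.mpr ⟨⟨f j, hfj⟩, mem_univ _, this.symm⟩
      have hc3 : ∀ i, i ∉ R → Nat.card {j // f j = i} ≠ 1 := by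
        intro i hiR hcard
        exact hiR ((hf i).mp hcard)
      exact ⟨⟨(σ, f), hc1, hc2, hc3⟩, rfl⟩
  rw [h1]
  -- Step 2: sigma decomposition
  have h2 : Nat.card {p : ({x // x ∈ R} ↪ Fin n) × (Fin n → Fin l) // Pcond R p.1 p.2}
      = ∑ σ : {x // x ∈ R} ↪ Fin n, Nat.card {f : Fin n → Fin l // Pcond R σ f} := by
    rw [Nat.card_congr (Equiv.subtypeProdEquivSigmaSubtype (fun σ f => Pcond R σ f))]
    simp only [Nat.card_eq_fintype_card]
    exact Fintype.card_sigma
  rw [h2]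
  -- Step 3: each summand
  have h3 : ∀ σ : {x // x ∈ R} ↪ Fin n,
      Nat.card {f : Fin n → Fin l // Pcond R σ f} = z (l - R.card) (n - R.card) := by
    intro σ
    rw [step3 R σ]
    have e1 : {j : Fin n // j ∉ univ.map σ} ≃ Fin (n - R.card) := by
      apply Fintype.equivFinOfCardEq
      rw [Fintype.card_subtype_compl, Fintype.card_fin]
      congr 1
      rw [Fintype.card_of_subtype (univ.map σ) (fun x => Iff.rfl),
        card_map, card_univ, Fintype.card_coe]
    have e2 : {i : Fin l // i ∉ R} ≃ Fin (l - R.card) := by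
      apply Fintype.equivFinOfCardEq
      rw [Fintype.card_subtype_compl, Fintype.card_fin]
      congr 1
      rw [Fintype.card_of_subtype R (fun x => Iff.rfl)]
    rw [ZZ_congr e1 e2, ← z_eq_ZZ]
  calc ∑ σ : {x // x ∈ R} ↪ Fin n, Nat.card {f : Fin n → Fin l // Pcond R σ f}
      = ∑ _σ : {x // x ∈ R} ↪ Fin n, z (l - R.card) (n - R.card) :=
        Finset.sum_congr rfl (fun σ _ => h3 σ)
    _ = Fintype.card ({x // x ∈ R} ↪ Fin n) * z (l - R.card) (n - R.card) := by
        rw [Finset.sum_const, card_univ, smul_eq_mul]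
    _ = n.descFactorial R.card * z (l - R.card) (n - R.card) := by
        rw [Fintype.card_embedding_eq, Fintype.card_coe, Fintype.card_fin]

lemma master (l n : ℕ) :
    l ^ n = ∑ c ∈ Finset.range (l + 1),
      l.choose c * (n.descFactorial c * z (l - c) (n - c)) := by
  classical
  rw [partition l n]
  calc (∑ R : Finset (Fin l),
        Nat.card {f : Fin n → Fin l // ∀ i, (Nat.card {j // f j = i} = 1 ↔ i ∈ R)})
      = ∑ R ∈ (univ : Finset (Fin l)).powerset,
          n.descFactorial R.card * z (l - R.card) (n - R.card) := by
        rw [powerset_univ]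
        exact Finset.sum_congr rfl fun R _ => perR l n R
    _ = ∑ c ∈ Finset.range ((univ : Finset (Fin l)).card + 1),
          ∑ R ∈ Finset.powersetCard c (univ : Finset (Fin l)),
            n.descFactorial R.card * z (l - R.card) (n - R.card) :=
        Finset.sum_powerset _ _
    _ = ∑ c ∈ Finset.range (l + 1),
          l.choose c * (n.descFactorial c * z (l - c) (n - c)) := by
        rw [card_univ, Fintype.card_fin]
        refine Finset.sum_congr rfl fun c hc => ?_
        have hconst : ∀ R ∈ Finset.powersetCard c (univ : Finset (Fin l)),
            n.descFactorial R.card * z (l - R.card) (n - R.card)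
              = n.descFactorial c * z (l - c) (n - c) := by
          intro R hR
          rw [(Finset.mem_powersetCard.mp hR).2]
        rw [Finset.sum_congr rfl hconst, Finset.sum_const, Finset.card_powersetCard,
          card_univ, Fintype.card_fin, smul_eq_mul]

theorem z_recursion :
    (∀ l n : ℕ, 1 ≤ l → 1 ≤ n →
      (z l n : ℤ) = (l : ℤ) ^ n -
        ∑ c ∈ Finset.Icc 1 (min l n),
          (c.factorial : ℤ) * (l.choose c) * (n.choose c) * z (l - c) (n - c)) ∧
    z 0 0 = 1 ∧ (∀ l : ℕ, z l 0 = 1) ∧ (∀ n : ℕ, 1 ≤ n → z 0 n = 0) := by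
  have hz0 : ∀ l : ℕ, z l 0 = 1 := by
    intro l
    have hall : ∀ M : Fin l → Fin 0 → Bool, isS M ∧ isStop M := fun M =>
      ⟨fun j => j.elim0, fun i => by simp [rowWt]⟩
    rw [z, Fintype.card_congr (Equiv.subtypeUnivEquiv hall)]
    simp
  refine ⟨?_, hz0 0, hz0, ?_⟩
  · intro l n hl hn
    have hN : l ^ n = z l n +
        ∑ c ∈ Finset.Icc 1 l, l.choose c * (n.descFactorial c * z (l - c) (n - c)) := by
      have e0 : l.choose 0 * (n.descFactorial 0 * z (l - 0) (n - 0)) = z l n := by simp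
      have e1 : ∑ i ∈ Finset.range l,
          l.choose (i+1) * (n.descFactorial (i+1) * z (l - (i+1)) (n - (i+1)))
          = ∑ c ∈ Finset.Icc 1 l, l.choose c * (n.descFactorial c * z (l - c) (n - c)) := by
        rw [← Finset.Ico_add_one_right_eq_Icc, Finset.sum_Ico_eq_sum_range]
        have hll : l + 1 - 1 = l := rfl
        rw [hll]
        exact Finset.sum_congr rfl fun i _ => by rw [Nat.add_comm 1 i]
      rw [master l n, Finset.sum_range_succ', e0, e1, Nat.add_comm]
    have hNZ := congrArg (fun m : ℕ => (m : ℤ)) hN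
    push_cast at hNZ
    have hsum : ∑ c ∈ Finset.Icc 1 (min l n),
        (c.factorial : ℤ) * (l.choose c) * (n.choose c) * (z (l - c) (n - c))
        = ∑ c ∈ Finset.Icc 1 l,
            ((l.choose c : ℤ) * ((n.descFactorial c : ℤ) * (z (l - c) (n - c) : ℤ))) := by
      rw [Finset.sum_subset (Finset.Icc_subset_Icc_right (Nat.min_le_left l n)) ?_]
      · refine Finset.sum_congr rfl fun c _ => ?_
        rw [Nat.descFactorial_eq_factorial_mul_choose]
        push_cast
        ring
      · intro c hc hc'
        obtain ⟨h1, h2⟩ := Finset.mem_Icc.mp hc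
        have hnc : n < c := by
          by_contra h
          push_neg at h
          exact hc' (Finset.mem_Icc.mpr ⟨h1, le_min h2 h⟩)
        rw [Nat.choose_eq_zero_of_lt hnc]
        push_cast
        ring
    rw [hsum]
    linarith [hNZ]
  · intro n hn
    rw [z]
    rw [Fintype.card_eq_zero_iff]
    refine ⟨fun M => ?_⟩
    have := M.2.1 ⟨0, hn⟩
    simp [colWt] at this
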